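/- Let N : ℕ, let f : ℝ → ℂ be differentiable at 0 with f(0) = 1, and let λ : Fin N → ℂ be null with λ ≠ 0. Then P_f is Fréchet differentiable over ℝ at λ, and its derivative is the ℂ-linear map Π_⊥ : v ↦ v − (B(λ,v)/‖λ‖²) • λ̄. In particular, on the constraint surface the Jacobian is independent of f and its antiholomorphic block vanishes. (Toy-model form of Proposition 2, item 4, equations (Proj-matrix-onshell) and (proj-matrix-on-shell).) -/

import Mathlib

noncomputable section

open scoped BigOperators

namespace PureSpinorToy

variable {N : ℕ}

/-- Complex bilinear pairing `B(ρ,σ) = ∑ I, ρ_I σ_I`. -/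
def B (ρ σ : Fin N → ℂ) : ℂ := ∑ I, ρ I * σ I

/-- Hermitian inner product `⟪ρ,σ⟫ = ∑ I, conj(ρ_I) σ_I`. -/
def hInner (ρ σ : Fin N → ℂ) : ℂ := ∑ I, (starRingEnd ℂ) (ρ I) * σ I

/-- Norm square `‖ρ‖² = ⟪ρ,ρ⟫` (a nonnegative real). -/
def nsq (ρ : Fin N → ℂ) : ℝ := (hInner ρ ρ).re

/-- Componentwise complex conjugation `ρ̄`. -/
def conjFun (ρ : Fin N → ℂ) : Fin N → ℂ := fun I => (starRingEnd ℂ) (ρ I)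

/-- `ζ(ρ) = B(ρ,ρ)/‖ρ‖²`. -/
def zeta (ρ : Fin N → ℂ) : ℂ := B ρ ρ / (nsq ρ : ℂ)

/-- `ξ(ρ) = |ζ(ρ)|²`. -/
def xi (ρ : Fin N → ℂ) : ℝ := Complex.normSq (zeta ρ)

/-- The family of projection maps
`P_f(ρ) = f(ξ(ρ)) • (ρ − (ζ(ρ)/(1+√(1−ξ(ρ)))) • ρ̄)`. -/
def P (f : ℝ → ℂ) (ρ : Fin N → ℂ) : Fin N → ℂ :=
  f (xi ρ) • (ρ - (zeta ρ / (1 + (Real.sqrt (1 - xi ρ) : ℂ))) • conjFun ρ)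

/-- The special function `h(t) = (1+√(1−t))/(2√(1−t))`. -/
def h (t : ℝ) : ℂ := (((1 + Real.sqrt (1 - t)) / (2 * Real.sqrt (1 - t)) : ℝ) : ℂ)

/-- The potential `Φ(ρ) = (‖ρ‖²/2)(1+√(1−ξ(ρ)))`. -/
def Phi (ρ : Fin N → ℂ) : ℝ := (nsq ρ / 2) * (1 + Real.sqrt (1 - xi ρ))


open ContinuousLinearMap in
/-- The continuous `ℝ`-linear map `v ↦ B lam v`. -/
def Bclm (lam : Fin N → ℂ) : (Fin N → ℂ) →L[ℝ] ℂ :=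
  ∑ I, lam I • (ContinuousLinearMap.proj I : (Fin N → ℂ) →L[ℝ] ℂ)

lemma Bclm_apply (lam v : Fin N → ℂ) : Bclm lam v = B lam v := by
  simp [Bclm, B]

/-- Complex conjugation as a continuous `ℝ`-linear map. -/
def cjc : ℂ →L[ℝ] ℂ := Complex.conjCLE.toContinuousLinearMap

lemma hBd (lam : Fin N → ℂ) :
    HasFDerivAt (fun ρ : Fin N → ℂ => B ρ ρ) ((2:ℂ) • Bclm lam) lam := by
  have h := HasFDerivAt.fun_sum (u := Finset.univ) (x := lam)
    (A := fun I (ρ : Fin N → ℂ) => ρ I * ρ I)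
    (A' := fun I => lam I • (ContinuousLinearMap.proj I : (Fin N → ℂ) →L[ℝ] ℂ)
      + lam I • (ContinuousLinearMap.proj I : (Fin N → ℂ) →L[ℝ] ℂ))
    (fun I _ => ((ContinuousLinearMap.proj I : (Fin N → ℂ) →L[ℝ] ℂ)).hasFDerivAt.fun_mul
      ((ContinuousLinearMap.proj I : (Fin N → ℂ) →L[ℝ] ℂ)).hasFDerivAt)
  convert! h using 1
  ext v
  simp [Bclm, Finset.sum_add_distrib, two_mul, Finset.mul_sum]

lemma nsq_eq (ρ : Fin N → ℂ) : nsq ρ = ∑ I, Complex.normSq (ρ I) := by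
  simp only [nsq, hInner, Complex.re_sum]
  refine Finset.sum_congr rfl fun I _ => ?_
  rw [← Complex.normSq_eq_conj_mul_self, Complex.ofReal_re]

lemma nsq_pos {lam : Fin N → ℂ} (h : lam ≠ 0) : 0 < nsq lam := by
  rw [nsq_eq]
  obtain ⟨I, hI⟩ := Function.ne_iff.mp h
  exact Finset.sum_pos' (fun J _ => Complex.normSq_nonneg _)
    ⟨I, Finset.mem_univ I, Complex.normSq_pos.mpr hI⟩

/-- Derivative of `nsq`. -/
def Dnsq (lam : Fin N → ℂ) : (Fin N → ℂ) →L[ℝ] ℝ :=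
  Complex.reCLM.comp (∑ I, ((starRingEnd ℂ) (lam I) •
      (ContinuousLinearMap.proj I : (Fin N → ℂ) →L[ℝ] ℂ)
      + lam I • (cjc.comp (ContinuousLinearMap.proj I))))

lemma hnsqd (lam : Fin N → ℂ) : HasFDerivAt nsq (Dnsq lam) lam := by
  have h2 : HasFDerivAt (fun ρ : Fin N → ℂ => hInner ρ ρ)
      (∑ I, ((starRingEnd ℂ) (lam I) •
        (ContinuousLinearMap.proj I : (Fin N → ℂ) →L[ℝ] ℂ)
        + lam I • (cjc.comp (ContinuousLinearMap.proj I)))) lam := by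
    refine HasFDerivAt.fun_sum fun I _ => ?_
    have hc : HasFDerivAt (fun ρ : Fin N → ℂ => (starRingEnd ℂ) (ρ I))
        (cjc.comp (ContinuousLinearMap.proj I)) lam :=
      (cjc.comp (ContinuousLinearMap.proj I : (Fin N → ℂ) →L[ℝ] ℂ)).hasFDerivAt
    exact hc.fun_mul ((ContinuousLinearMap.proj I : (Fin N → ℂ) →L[ℝ] ℂ)).hasFDerivAt
  exact Complex.reCLM.hasFDerivAt.comp lam h2

/-- Componentwise conjugation as a continuous `ℝ`-linear map. -/
def Cconj : (Fin N → ℂ) →L[ℝ] (Fin N → ℂ) :=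
  ContinuousLinearMap.pi fun I => cjc.comp (ContinuousLinearMap.proj I)

lemma hconjd (lam : Fin N → ℂ) : HasFDerivAt conjFun (Cconj (N := N)) lam :=
  Cconj.hasFDerivAt

lemma Cconj_apply (v : Fin N → ℂ) : Cconj (N := N) v = conjFun v := rfl

/-- Toy model, Proposition 2 item 4 (Proj-matrix-onshell)/(proj-matrix-on-shell):
on the constraint surface the Jacobian of `P_f` is the ℂ-linear map
`Π_⊥ : v ↦ v − (B(λ,v)/‖λ‖²) • λ̄`, independently of `f`. -/
theorem statement11 {N : ℕ} (f : ℝ → ℂ) (hf0 : f 0 = 1) (hfd : DifferentiableAt ℝ f 0)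
    (lam : Fin N → ℂ) (hnull : B lam lam = 0) (hlam : lam ≠ 0) :
    ∃ L : (Fin N → ℂ) →L[ℝ] (Fin N → ℂ), HasFDerivAt (P f) L lam ∧
      ∀ v, L v = v - (B lam v / (nsq lam : ℂ)) • conjFun lam := by
  classical
  have hnpos : 0 < nsq lam := nsq_pos hlam
  have hnne : ((nsq lam : ℝ) : ℂ) ≠ 0 := Complex.ofReal_ne_zero.mpr hnpos.ne'
  have hm : HasFDerivAt (fun ρ : Fin N → ℂ => ((nsq ρ : ℝ) : ℂ))
      (Complex.ofRealCLM.comp (Dnsq lam)) lam :=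
    Complex.ofRealCLM.hasFDerivAt.comp lam (hnsqd lam)
  have hinv : HasFDerivAt (fun ρ : Fin N → ℂ => (((nsq ρ : ℝ) : ℂ))⁻¹)
      ((-ContinuousLinearMap.mulLeftRight ℝ ℂ (((nsq lam :ℝ):ℂ))⁻¹ (((nsq lam:ℝ):ℂ))⁻¹).comp
        (Complex.ofRealCLM.comp (Dnsq lam))) lam :=
    (hasFDerivAt_inv' hnne).comp lam hm
  have hz : HasFDerivAt (zeta (N := N))
      ((2 * ((nsq lam : ℝ):ℂ)⁻¹) • Bclm lam) lam := by
    have h := (hBd lam).fun_mul hinv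
    have h' : HasFDerivAt (fun ρ : Fin N → ℂ => B ρ ρ * (((nsq ρ : ℝ) : ℂ))⁻¹)
        ((2 * ((nsq lam : ℝ):ℂ)⁻¹) • Bclm lam) lam := by
      convert! h using 1
      ext v
      simp [hnull]
      ring
    have heq : (zeta (N := N)) = fun ρ => B ρ ρ * (((nsq ρ : ℝ) : ℂ))⁻¹ := by
      funext ρ; simp [zeta, div_eq_mul_inv]
    rw [heq]
    exact h'
  have hz0 : zeta lam = 0 := by simp [zeta, hnull]
  have hns0 : HasFDerivAt Complex.normSq (0 : ℂ →L[ℝ] ℝ) 0 := by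
    have h := (Complex.reCLM.hasFDerivAt (x := (0:ℂ))).fun_mul Complex.reCLM.hasFDerivAt |>.fun_add
      ((Complex.imCLM.hasFDerivAt (x := (0:ℂ))).fun_mul Complex.imCLM.hasFDerivAt)
    have heq : Complex.normSq = fun z : ℂ => z.re * z.re + z.im * z.im := by
      funext z; simp [Complex.normSq_apply]
    rw [heq]
    convert! h using 1
    ext v
    simp
  have hxi : HasFDerivAt (xi (N := N)) (0 : (Fin N → ℂ) →L[ℝ] ℝ) lam := by
    have h := HasFDerivAt.comp lam (hz0 ▸ hns0) hz
    simp at h; exact h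
  have hxi0 : xi lam = 0 := by simp [xi, hz0]
  have h1xi : HasFDerivAt (fun ρ : Fin N → ℂ => 1 - xi ρ) (0 : (Fin N → ℂ) →L[ℝ] ℝ) lam := by
    have := (hasFDerivAt_const (1:ℝ) lam).sub hxi
    simp at this; exact this
  have hq : HasFDerivAt (fun ρ : Fin N → ℂ => Real.sqrt (1 - xi ρ))
      (0 : (Fin N → ℂ) →L[ℝ] ℝ) lam := by
    have := h1xi.sqrt (by rw [hxi0]; norm_num)
    simpa using this
  have hden : HasFDerivAt (fun ρ : Fin N → ℂ => (1 : ℂ) + (Real.sqrt (1 - xi ρ) : ℂ))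
      (0 : (Fin N → ℂ) →L[ℝ] ℂ) lam := by
    have := (hasFDerivAt_const (1:ℂ) lam).add (Complex.ofRealCLM.hasFDerivAt.comp lam hq)
    simp at this; exact this
  have hdval : (1 : ℂ) + (Real.sqrt (1 - xi lam) : ℂ) = 2 := by
    rw [hxi0]; norm_num
  have hdinv : HasFDerivAt (fun ρ : Fin N → ℂ => ((1 : ℂ) + (Real.sqrt (1 - xi ρ) : ℂ))⁻¹)
      (0 : (Fin N → ℂ) →L[ℝ] ℂ) lam := by
    have h2 : ((1 : ℂ) + (Real.sqrt (1 - xi lam) : ℂ)) ≠ 0 := by rw [hdval]; norm_num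
    have := (hasFDerivAt_inv' (𝕜 := ℝ) h2).comp lam hden
    simp at this; exact this
  have hs : HasFDerivAt (fun ρ : Fin N → ℂ => zeta ρ / (1 + (Real.sqrt (1 - xi ρ) : ℂ)))
      ((((nsq lam : ℝ):ℂ))⁻¹ • Bclm lam) lam := by
    have h := hz.fun_mul hdinv
    have h' : HasFDerivAt
        (fun ρ : Fin N → ℂ => zeta ρ * ((1:ℂ) + (Real.sqrt (1 - xi ρ) : ℂ))⁻¹)
        ((((nsq lam : ℝ):ℂ))⁻¹ • Bclm lam) lam := by
      convert! h using 1
      ext v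
      simp [hz0, hxi0]
      ring_nf
    have heq : (fun ρ : Fin N → ℂ => zeta ρ / (1 + (Real.sqrt (1 - xi ρ) : ℂ)))
        = fun ρ : Fin N → ℂ => zeta ρ * ((1:ℂ) + (Real.sqrt (1 - xi ρ) : ℂ))⁻¹ := by
      funext ρ; rw [div_eq_mul_inv]
    rw [heq]; exact h'
  have hs0 : zeta lam / (1 + (Real.sqrt (1 - xi lam) : ℂ)) = 0 := by
    rw [hz0]; simp
  have hf' : HasFDerivAt f (fderiv ℝ f 0) (xi lam) := by
    rw [hxi0]; exact hfd.hasFDerivAt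
  have hcf : HasFDerivAt (fun ρ : Fin N → ℂ => f (xi ρ)) (0 : (Fin N → ℂ) →L[ℝ] ℂ) lam := by
    have := HasFDerivAt.comp lam hf' hxi
    simp at this; exact this
  have hsm := hs.smul (hconjd (N := N) lam)
  have hsub := (hasFDerivAt_id lam).sub hsm
  have hfin := hcf.smul hsub
  have hPd : HasFDerivAt (P f)
      (f (xi lam) • (ContinuousLinearMap.id ℝ (Fin N → ℂ) -
        ((zeta lam / (1 + (Real.sqrt (1 - xi lam) : ℂ))) • Cconj +
          ((((nsq lam : ℝ):ℂ))⁻¹ • Bclm lam).smulRight (conjFun lam))) +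
        (0 : (Fin N → ℂ) →L[ℝ] ℂ).smulRight
          (lam - (zeta lam / (1 + (Real.sqrt (1 - xi lam) : ℂ))) • conjFun lam)) lam := hfin
  refine ⟨_, hPd, fun v => ?_⟩
  simp [hxi0, hf0, hs0, hz0, Bclm_apply, div_eq_mul_inv, mul_comm, Cconj_apply]



end PureSpinorToy
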